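/- Let d ∈ ℕ, d ≥ 2, let r > 0, and let A ⊆ ℝ^d be an r-separated set. Then there exists a max{264d/r, 22r/(3d)}-bilipschitz mapping Φ : ℝ^d → ℝ^d such that Φ(A) ⊆ ℤ^d. -/

import Mathlib

noncomputable section

/-- `f` is `M`-bilipschitz on the set `s`. -/
def IsBilipOn {α β : Type*} [PseudoMetricSpace α] [PseudoMetricSpace β]
    (M : ℝ) (f : α → β) (s : Set α) : Prop :=
  ∀ x ∈ s, ∀ y ∈ s,
    (1 / M) * dist x y ≤ dist (f x) (f y) ∧ dist (f x) (f y) ≤ M * dist x y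

/-- The integer lattice `ℤ^d ⊆ ℝ^d`. -/
def intLat (d : ℕ) : Set (EuclideanSpace ℝ (Fin d)) := {x | ∀ i, ∃ n : ℤ, x i = n}

namespace Bilip18

variable {d : ℕ}

/-- Coordinatewise rounding. -/
def rnd (z : EuclideanSpace ℝ (Fin d)) : EuclideanSpace ℝ (Fin d) :=
  WithLp.toLp 2 (fun i => (round (z i) : ℝ))

lemma norm_rnd_sub (z : EuclideanSpace ℝ (Fin d)) :
    ‖rnd z - z‖ ≤ Real.sqrt d / 2 := by
  have h : dist (rnd z) z ≤ Real.sqrt d / 2 := by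
    rw [EuclideanSpace.dist_eq]
    have h1 : ∑ i, dist (rnd z i) (z i) ^ 2 ≤ (d : ℝ) / 4 := by
      have : ∀ i, dist (rnd z i) (z i) ^ 2 ≤ (1:ℝ)/4 := by
        intro i
        have : dist (rnd z i) (z i) ≤ 1/2 := by
          rw [Real.dist_eq]
          simpa [rnd, abs_sub_comm] using abs_sub_round (z i)
        nlinarith [dist_nonneg (x := rnd z i) (y := z i)]
      calc ∑ i, dist (rnd z i) (z i) ^ 2 ≤ ∑ _i : Fin d, (1:ℝ)/4 :=
            Finset.sum_le_sum fun i _ => this i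
        _ = (d : ℝ)/4 := by simp; ring
    calc Real.sqrt (∑ i, dist (rnd z i) (z i) ^ 2) ≤ Real.sqrt ((d:ℝ)/4) :=
          Real.sqrt_le_sqrt h1
      _ = Real.sqrt d / 2 := by
          rw [show (d:ℝ)/4 = (d:ℝ) * (1/2)^2 by ring, Real.sqrt_mul (by positivity),
            Real.sqrt_sq (by norm_num)]
          ring
  simpa [dist_eq_norm] using h

/-- The bump coefficient. -/
def bump (s : ℝ) (a z : EuclideanSpace ℝ (Fin d)) : ℝ :=
  max 0 (1 - dist z (s • a) / Real.sqrt d)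

/-- The perturbation. -/
def pert (A : Set (EuclideanSpace ℝ (Fin d))) (s : ℝ) (z : EuclideanSpace ℝ (Fin d)) :
    EuclideanSpace ℝ (Fin d) :=
  open Classical in
  if h : ∃ a ∈ A, dist z (s • a) < Real.sqrt d then
    bump s h.choose z • (rnd (s • h.choose) - s • h.choose)
  else 0

variable {A : Set (EuclideanSpace ℝ (Fin d))} {s : ℝ}

lemma bump_nonneg (s : ℝ) (a z : EuclideanSpace ℝ (Fin d)) : 0 ≤ bump s a z :=
  le_max_left _ _

lemma bump_lip (hD : 0 < Real.sqrt d) (a z w : EuclideanSpace ℝ (Fin d)) :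
    |bump s a z - bump s a w| ≤ dist z w / Real.sqrt d := by
  have h1 : |bump s a z - bump s a w| ≤
      |(1 - dist z (s • a) / Real.sqrt d) - (1 - dist w (s • a) / Real.sqrt d)| := by
    simpa [bump, max_comm] using
      abs_max_sub_max_le_abs (1 - dist z (s • a) / Real.sqrt d)
        (1 - dist w (s • a) / Real.sqrt d) 0
  have h2 : |(1 - dist z (s • a) / Real.sqrt d) - (1 - dist w (s • a) / Real.sqrt d)|
      = |dist w (s • a) - dist z (s • a)| / Real.sqrt d := by
    rw [show (1 - dist z (s • a) / Real.sqrt d) - (1 - dist w (s • a) / Real.sqrt d)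
      = (dist w (s • a) - dist z (s • a)) / Real.sqrt d from by ring, abs_div,
      abs_of_pos hD]
  have h3 : |dist w (s • a) - dist z (s • a)| ≤ dist w z := abs_dist_sub_le _ _ _
  rw [h2] at h1
  calc |bump s a z - bump s a w| ≤ |dist w (s • a) - dist z (s • a)| / Real.sqrt d := h1
    _ ≤ dist z w / Real.sqrt d := by
        rw [dist_comm z w]; gcongr

lemma pert_norm_le (hD : 0 < Real.sqrt d)
    {z : EuclideanSpace ℝ (Fin d)} (hz : ∃ a ∈ A, dist z (s • a) < Real.sqrt d) :
    ‖pert A s z‖ ≤ (Real.sqrt d - dist z (s • hz.choose)) / 2 := by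
  have hspec := hz.choose_spec
  rw [pert, dif_pos hz, norm_smul]
  have hlt := (div_lt_one hD).mpr hspec.2
  have hb : |bump s hz.choose z| ≤ 1 - dist z (s • hz.choose) / Real.sqrt d := by
    rw [abs_of_nonneg (bump_nonneg _ _ _)]
    exact max_le (by linarith) le_rfl
  have hv : ‖rnd (s • hz.choose) - s • hz.choose‖ ≤ Real.sqrt d / 2 := norm_rnd_sub _
  calc |bump s hz.choose z| * ‖rnd (s • hz.choose) - s • hz.choose‖
      ≤ (1 - dist z (s • hz.choose) / Real.sqrt d) * (Real.sqrt d / 2) :=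
        mul_le_mul hb hv (norm_nonneg _) (by linarith)
    _ = (Real.sqrt d - dist z (s • hz.choose)) / 2 := by field_simp

lemma pert_eq_zero {z : EuclideanSpace ℝ (Fin d)}
    (hz : ¬ ∃ a ∈ A, dist z (s • a) < Real.sqrt d) : pert A s z = 0 := by
  rw [pert, dif_neg hz]

lemma pert_lip (hD : 0 < Real.sqrt d)
    (H2D : ∀ a ∈ A, ∀ b ∈ A, a ≠ b → 2 * Real.sqrt d ≤ dist (s • a) (s • b))
    (z w : EuclideanSpace ℝ (Fin d)) :
    ‖pert A s z - pert A s w‖ ≤ (1/2) * dist z w := by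
  by_cases hz : ∃ a ∈ A, dist z (s • a) < Real.sqrt d
  · by_cases hw : ∃ a ∈ A, dist w (s • a) < Real.sqrt d
    · have hza := hz.choose_spec
      have hwb := hw.choose_spec
      by_cases hab : hz.choose = hw.choose
      · rw [pert, dif_pos hz, pert, dif_pos hw, ← hab, ← sub_smul, norm_smul]
        have h1 : |bump s hz.choose z - bump s hz.choose w| ≤ dist z w / Real.sqrt d :=
          bump_lip hD _ _ _
        have hv : ‖rnd (s • hz.choose) - s • hz.choose‖ ≤ Real.sqrt d / 2 := norm_rnd_sub _
        calc |bump s hz.choose z - bump s hz.choose w| * ‖rnd (s • hz.choose) - s • hz.choose‖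
            ≤ (dist z w / Real.sqrt d) * (Real.sqrt d / 2) :=
              mul_le_mul h1 hv (norm_nonneg _) (by positivity)
          _ = (1/2) * dist z w := by field_simp
      · have h1 := pert_norm_le hD hz
        have h2 := pert_norm_le hD hw
        have h3 : 2 * Real.sqrt d ≤ dist (s • hz.choose) (s • hw.choose) :=
          H2D _ hza.1 _ hwb.1 hab
        have h4 : dist (s • hz.choose) (s • hw.choose)
            ≤ dist z (s • hz.choose) + dist z w + dist w (s • hw.choose) := by
          calc dist (s • hz.choose) (s • hw.choose)
              ≤ dist (s • hz.choose) z + dist z (s • hw.choose) := dist_triangle _ _ _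
            _ ≤ dist (s • hz.choose) z + (dist z w + dist w (s • hw.choose)) := by
                linarith [dist_triangle z w (s • hw.choose)]
            _ = dist z (s • hz.choose) + dist z w + dist w (s • hw.choose) := by
                rw [dist_comm (s • hz.choose) z]; ring
        calc ‖pert A s z - pert A s w‖ ≤ ‖pert A s z‖ + ‖pert A s w‖ := norm_sub_le _ _
          _ ≤ (1/2) * dist z w := by linarith
    · have h1 := pert_norm_le hD hz
      have hza := hz.choose_spec
      have h2 : Real.sqrt d ≤ dist w (s • hz.choose) := by
        push_neg at hw; exact hw _ hza.1
      have h3 : dist w (s • hz.choose) ≤ dist w z + dist z (s • hz.choose) :=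
        dist_triangle _ _ _
      have h4 : dist w z = dist z w := dist_comm _ _
      rw [pert_eq_zero hw, sub_zero]
      linarith
  · by_cases hw : ∃ a ∈ A, dist w (s • a) < Real.sqrt d
    · have h1 := pert_norm_le hD hw
      have hwb := hw.choose_spec
      have h2 : Real.sqrt d ≤ dist z (s • hw.choose) := by
        push_neg at hz; exact hz _ hwb.1
      have h3 : dist z (s • hw.choose) ≤ dist z w + dist w (s • hw.choose) :=
        dist_triangle _ _ _
      rw [pert_eq_zero hz]
      rw [show (0:EuclideanSpace ℝ (Fin d)) - pert A s w = -(pert A s w) by abel, norm_neg]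
      linarith
    · rw [pert_eq_zero hz, pert_eq_zero hw, sub_zero, norm_zero]
      positivity

lemma pert_at (hD : 0 < Real.sqrt d)
    (H2D : ∀ a ∈ A, ∀ b ∈ A, a ≠ b → 2 * Real.sqrt d ≤ dist (s • a) (s • b))
    {a : EuclideanSpace ℝ (Fin d)} (ha : a ∈ A) :
    pert A s (s • a) = rnd (s • a) - s • a := by
  have hz : ∃ b ∈ A, dist (s • a) (s • b) < Real.sqrt d := ⟨a, ha, by simp [hD]⟩
  have hspec := hz.choose_spec
  have hba : hz.choose = a := by
    by_contra hne
    have h1 := H2D _ hspec.1 _ ha hne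
    have h2 := hspec.2
    rw [dist_comm] at h2
    linarith
  rw [pert, dif_pos hz, hba]
  have hb1 : bump s a (s • a) = 1 := by simp [bump]
  rw [hb1, one_smul]

end Bilip18

set_option maxHeartbeats 1000000 in
theorem stmt18 (d : ℕ) (hd : 2 ≤ d) (r : ℝ) (hr : 0 < r)
    (A : Set (EuclideanSpace ℝ (Fin d)))
    (hsep : ∀ a ∈ A, ∀ b ∈ A, a ≠ b → r ≤ dist a b) :
    ∃ Φ : EuclideanSpace ℝ (Fin d) → EuclideanSpace ℝ (Fin d),
      IsBilipOn (max (264 * d / r) (22 * r / (3 * d))) Φ Set.univ ∧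
      Φ '' A ⊆ intLat d := by
  classical
  have hd0 : (0:ℝ) < d := by
    have : (2:ℝ) ≤ d := by exact_mod_cast hd
    linarith
  set M : ℝ := max (264 * d / r) (22 * r / (3 * d)) with hMdef
  set D : ℝ := Real.sqrt d with hDdef
  have hD : 0 < D := Real.sqrt_pos.mpr hd0
  have hDsq : D ^ 2 = d := Real.sq_sqrt hd0.le
  have hd2 : (2:ℝ) ≤ d := by exact_mod_cast hd
  have hDd : D ≤ d := by nlinarith [sq_nonneg (D - 1)]
  have hM1 : 264 * d / r ≤ M := le_max_left _ _
  have hM2 : 22 * r / (3 * d) ≤ M := le_max_right _ _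
  have hM44 : 44 ≤ M := by
    by_contra h
    push_neg at h
    have h1 : 264 * d / r < 44 := lt_of_le_of_lt hM1 h
    have h2 : 22 * r / (3 * d) < 44 := lt_of_le_of_lt hM2 h
    rw [div_lt_iff₀ hr] at h1
    rw [div_lt_iff₀ (by positivity)] at h2
    nlinarith
  set s : ℝ := max (2 * D / r) 1 with hsdef
  have hs1 : 1 ≤ s := le_max_right _ _
  have hs0 : 0 < s := lt_of_lt_of_le one_pos hs1
  have hsr : 2 * D ≤ s * r := by
    have h := le_max_left (2 * D / r) 1
    rw [div_le_iff₀ hr] at h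
    linarith
  have H2D : ∀ a ∈ A, ∀ b ∈ A, a ≠ b → 2 * D ≤ dist (s • a) (s • b) := by
    intro a ha b hb hab
    rw [dist_smul₀, Real.norm_eq_abs, abs_of_pos hs0]
    have := hsep a ha b hb hab
    nlinarith
  have h3s : 3 * s ≤ 2 * M := by
    rcases max_cases (2 * D / r) 1 with ⟨he, hge⟩ | ⟨he, hlt⟩
    · rw [hsdef, he]
      have h6 : 3 * (2 * D / r) ≤ 264 * d / r := by
        rw [show 3 * (2 * D / r) = 6 * D / r from by ring]
        have h7 : 6 * D ≤ 264 * (d:ℝ) := by nlinarith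
        exact div_le_div_of_nonneg_right h7 hr.le
      linarith
    · rw [hsdef, he]; linarith
  refine ⟨fun x => s • x + Bilip18.pert A s (s • x), ?_, ?_⟩
  · intro x _ y _
    have hlip := Bilip18.pert_lip hD H2D (s • x) (s • y)
    have hdd : dist (s • x) (s • y) = s * dist x y := by
      rw [dist_smul₀, Real.norm_eq_abs, abs_of_pos hs0]
    have hnn : 0 ≤ dist x y := dist_nonneg
    set u : EuclideanSpace ℝ (Fin d) := s • x - s • y with hu
    set v : EuclideanSpace ℝ (Fin d) :=
      Bilip18.pert A s (s • x) - Bilip18.pert A s (s • y) with hv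
    have hun : ‖u‖ = s * dist x y := by
      rw [hu, ← dist_eq_norm, hdd]
    have hvn : ‖v‖ ≤ (1/2) * (s * dist x y) := by
      rw [hv]; rw [hdd] at hlip; exact hlip
    have hkey : dist (s • x + Bilip18.pert A s (s • x)) (s • y + Bilip18.pert A s (s • y))
        = ‖u + v‖ := by
      rw [dist_eq_norm]; congr 1; rw [hu, hv]; abel
    show (1 / M) * dist x y ≤ dist (s • x + Bilip18.pert A s (s • x))
        (s • y + Bilip18.pert A s (s • y)) ∧
      dist (s • x + Bilip18.pert A s (s • x)) (s • y + Bilip18.pert A s (s • y))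
        ≤ M * dist x y
    rw [hkey]
    constructor
    · have hlow : ‖u‖ - ‖v‖ ≤ ‖u + v‖ := by
        have := norm_sub_le (u + v) v
        simp only [add_sub_cancel_right] at this
        linarith
      have hMi : 1 / M ≤ s / 2 := by
        have hM0 : (0:ℝ) < M := by linarith
        have : 1 / M ≤ 1 / 44 := by
          apply one_div_le_one_div_of_le <;> linarith
        linarith
      have : (1 / M) * dist x y ≤ (s / 2) * dist x y := by nlinarith
      nlinarith [hun, hvn, hlow]
    · have hup : ‖u + v‖ ≤ ‖u‖ + ‖v‖ := norm_add_le _ _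
      nlinarith [hun, hvn, hup]
  · rintro _ ⟨a, ha, rfl⟩
    show s • a + Bilip18.pert A s (s • a) ∈ intLat d
    rw [Bilip18.pert_at hD H2D ha,
      show s • a + (Bilip18.rnd (s • a) - s • a) = Bilip18.rnd (s • a) from by abel]
    intro i
    exact ⟨round ((s • a) i), rfl⟩

end
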